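/- Let m, n be positive integers and let c be the diagonal coloring of the m×n grid graph, defined by c(i,j) = i + j (mod 3) as an element of ZMod 3. Then the minimum cardinality of a forcing set for c is exactly m + n − 2: there exists a forcing set for c of cardinality m + n − 2, and every forcing set for c has cardinality at least m + n − 2. -/

import Mathlib

/-- Two vertices of the `m × n` grid graph are adjacent:
`(i,j)` is adjacent to `(i',j')` iff `|i-i'| + |j-j'| = 1`. -/
def GridAdj {m n : ℕ} (u v : Fin m × Fin n) : Prop :=
  |(u.1.val : ℤ) - (v.1.val : ℤ)| + |(u.2.val : ℤ) - (v.2.val : ℤ)| = 1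

/-- A proper `3`-coloring of the `m × n` grid graph. -/
def IsProperColoring {m n : ℕ} (c : Fin m × Fin n → ZMod 3) : Prop :=
  ∀ u v, GridAdj u v → c u ≠ c v

/-- The set of (unordered) edges of the `m × n` grid graph. -/
def GridEdges (m n : ℕ) : Set (Sym2 (Fin m × Fin n)) :=
  {e | ∃ u v, GridAdj u v ∧ e = s(u, v)}

/-- `F` is a forcing set for the proper `3`-coloring `c`: the only proper
`3`-coloring agreeing with `c` at the base vertex `v₀ = (0,0)` and having the same
color differences as `c` across every edge of `F` is `c` itself. -/
def IsForcing {m n : ℕ} [NeZero m] [NeZero n] (c : Fin m × Fin n → ZMod 3)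
    (F : Set (Sym2 (Fin m × Fin n))) : Prop :=
  ∀ c' : Fin m × Fin n → ZMod 3, IsProperColoring c' →
    c' (0, 0) = c (0, 0) →
    (∀ u v : Fin m × Fin n, GridAdj u v → s(u, v) ∈ F → c' v - c' u = c v - c u) →
    c' = c

/-- The checkerboard `3`-coloring of the grid, corresponding to the standard
Miura-ori mountain-valley assignment. -/
def checkerboard {m n : ℕ} : Fin m × Fin n → ZMod 3 :=
  fun v => if (v.1.val + v.2.val) % 2 = 0 then 0 else 1

/-- The diagonal coloring of the `m × n` grid graph: `c(i,j) = i + j (mod 3)`. -/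
def diagonalColoring {m n : ℕ} : Fin m × Fin n → ZMod 3 :=
  fun v => ((v.1.val + v.2.val : ℕ) : ZMod 3)

lemma gridAdj_iff {m n : ℕ} (u v : Fin m × Fin n) : GridAdj u v ↔
    ((u.1.val = v.1.val ∧ (u.2.val + 1 = v.2.val ∨ v.2.val + 1 = u.2.val)) ∨
     (u.2.val = v.2.val ∧ (u.1.val + 1 = v.1.val ∨ v.1.val + 1 = u.1.val))) := by
  unfold GridAdj; rw [Int.abs_eq_natAbs, Int.abs_eq_natAbs]; omega

lemma zmod3_forced (x a : ZMod 3) (h1 : x ≠ a) (h2 : x ≠ a + 2) : x = a + 1 := by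
  revert x a; decide

/-- The Γ-shaped forcing set: row 0 plus last column. -/
noncomputable def gammaSet (m n : ℕ) [NeZero m] [NeZero n] : Finset (Sym2 (Fin m × Fin n)) :=
  (Finset.univ.image fun j : Fin (n-1) =>
    s(((⟨0, Nat.pos_of_ne_zero (NeZero.ne m)⟩ : Fin m), (⟨j.val, by have := j.isLt; omega⟩ : Fin n)),
      ((⟨0, Nat.pos_of_ne_zero (NeZero.ne m)⟩ : Fin m), (⟨j.val+1, by have := j.isLt; omega⟩ : Fin n)))) ∪
  (Finset.univ.image fun i : Fin (m-1) =>
    s(((⟨i.val, by have := i.isLt; omega⟩ : Fin m), (⟨n-1, by have := Nat.pos_of_ne_zero (NeZero.ne n); omega⟩ : Fin n)),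
      ((⟨i.val+1, by have := i.isLt; omega⟩ : Fin m), (⟨n-1, by have := Nat.pos_of_ne_zero (NeZero.ne n); omega⟩ : Fin n))))

lemma gammaSet_card (m n : ℕ) [NeZero m] [NeZero n] : (gammaSet m n).card = m + n - 2 := by
  have hm := Nat.pos_of_ne_zero (NeZero.ne m)
  have hn := Nat.pos_of_ne_zero (NeZero.ne n)
  rw [gammaSet, Finset.card_union_of_disjoint, Finset.card_image_of_injective,
      Finset.card_image_of_injective] <;>
  try simp [Finset.card_univ]
  · omega
  · intro a b hab
    simp only [Sym2.eq_iff, Prod.mk.injEq, Fin.mk.injEq] at hab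
    exact Fin.ext (by omega)
  · intro a b hab
    simp only [Sym2.eq_iff, Prod.mk.injEq, Fin.mk.injEq] at hab
    exact Fin.ext (by omega)
  · rw [Finset.disjoint_left]
    rintro e he1 he2
    simp only [Finset.mem_image, Finset.mem_univ, true_and] at he1 he2
    obtain ⟨j, rfl⟩ := he1
    obtain ⟨i, hi⟩ := he2
    simp only [Sym2.eq_iff, Prod.mk.injEq, Fin.mk.injEq] at hi
    omega

lemma gammaSet_subset (m n : ℕ) [NeZero m] [NeZero n] :
    ↑(gammaSet m n) ⊆ GridEdges m n := by
  intro e he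
  simp only [gammaSet, Finset.coe_union, Set.mem_union, Finset.coe_image,
    Set.mem_image, Finset.mem_coe, Finset.mem_image, Finset.mem_univ, true_and] at he
  rcases he with ⟨j, rfl⟩ | ⟨i, rfl⟩
  · refine ⟨_, _, ?_, rfl⟩
    exact (gridAdj_iff _ _).2 (Or.inl ⟨rfl, Or.inl rfl⟩)
  · refine ⟨_, _, ?_, rfl⟩
    exact (gridAdj_iff _ _).2 (Or.inr ⟨rfl, Or.inl rfl⟩)

lemma gammaSet_forcing (m n : ℕ) [NeZero m] [NeZero n] :
    IsForcing diagonalColoring (↑(gammaSet m n) : Set (Sym2 (Fin m × Fin n))) := by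
  have hm := Nat.pos_of_ne_zero (NeZero.ne m)
  have hn := Nat.pos_of_ne_zero (NeZero.ne n)
  intro c' hp h0 hF
  -- membership helpers
  have memRow : ∀ (j : ℕ) (hj : j + 1 < n) (h0m : (0:ℕ) < m),
      s(((⟨0, h0m⟩ : Fin m), (⟨j, by omega⟩ : Fin n)), ((⟨0, h0m⟩ : Fin m), (⟨j+1, hj⟩ : Fin n)))
        ∈ (↑(gammaSet m n) : Set (Sym2 (Fin m × Fin n))) := by
    intro j hj h0m
    simp only [gammaSet, Finset.coe_union, Set.mem_union, Finset.coe_image, Set.mem_image,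
      Finset.mem_coe, Finset.mem_univ, true_and]
    exact Or.inl ⟨⟨j, by omega⟩, rfl⟩
  have memCol : ∀ (i : ℕ) (hi : i + 1 < m),
      s(((⟨i, by omega⟩ : Fin m), (⟨n-1, by omega⟩ : Fin n)),
        ((⟨i+1, hi⟩ : Fin m), (⟨n-1, by omega⟩ : Fin n)))
        ∈ (↑(gammaSet m n) : Set (Sym2 (Fin m × Fin n))) := by
    intro i hi
    simp only [gammaSet, Finset.coe_union, Set.mem_union, Finset.coe_image, Set.mem_image,
      Finset.mem_coe, Finset.mem_univ, true_and]
    exact Or.inr ⟨⟨i, by omega⟩, rfl⟩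
  have key : ∀ i (hi : i < m) j (hj : j < n),
      c' (⟨i, hi⟩, ⟨j, hj⟩) = ((i + j : ℕ) : ZMod 3) := by
    intro i
    induction i with
    | zero =>
      intro hi j
      induction j with
      | zero =>
        intro hj
        have hv : ((0 : Fin m), (0 : Fin n)) = ((⟨0, hi⟩ : Fin m), (⟨0, hj⟩ : Fin n)) := by
          simp [Prod.ext_iff, Fin.ext_iff]
        rw [← hv, h0]
        simp [diagonalColoring]
      | succ j ihj =>
        intro hj
        have hj' : j < n := by omega
        have hadj : GridAdj ((⟨0, hi⟩ : Fin m), (⟨j, hj'⟩ : Fin n)) ((⟨0, hi⟩ : Fin m), (⟨j+1, hj⟩ : Fin n)) :=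
          (gridAdj_iff _ _).2 (Or.inl ⟨rfl, Or.inl rfl⟩)
        have hd := hF _ _ hadj (memRow j hj hi)
        rw [ihj hj'] at hd
        simp only [diagonalColoring] at hd
        have : c' ((⟨0, hi⟩ : Fin m), (⟨j+1, hj⟩ : Fin n)) = ((0 + (j+1) : ℕ) : ZMod 3) := by
          push_cast at hd ⊢
          linear_combination hd
        exact this
    | succ i ihi =>
      intro hi
      have hi' : i < m := by omega
      have hbase : c' ((⟨i+1, hi⟩ : Fin m), (⟨n-1, by omega⟩ : Fin n))
          = ((i + 1 + (n-1) : ℕ) : ZMod 3) := by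
        have hadj : GridAdj ((⟨i, by omega⟩ : Fin m), (⟨n-1, by omega⟩ : Fin n))
            ((⟨i+1, hi⟩ : Fin m), (⟨n-1, by omega⟩ : Fin n)) :=
          (gridAdj_iff _ _).2 (Or.inr ⟨rfl, Or.inl rfl⟩)
        have hd := hF _ _ hadj (memCol i hi)
        rw [ihi hi' (n-1) (by omega)] at hd
        simp only [diagonalColoring] at hd
        push_cast at hd ⊢
        linear_combination hd
      have back : ∀ d j (hj : j < n), j + d = n - 1 →
          c' ((⟨i+1, hi⟩ : Fin m), (⟨j, hj⟩ : Fin n)) = ((i + 1 + j : ℕ) : ZMod 3) := by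
        intro d
        induction d with
        | zero =>
          intro j hj hje
          have : j = n - 1 := by omega
          subst this
          exact hbase
        | succ d ihd =>
          intro j hj hje
          have hj1 : j + 1 < n := by omega
          have h1 : c' ((⟨i+1, hi⟩ : Fin m), (⟨j+1, hj1⟩ : Fin n)) = ((i + 1 + (j+1) : ℕ) : ZMod 3) :=
            ihd (j+1) hj1 (by omega)
          have h2 : c' ((⟨i, hi'⟩ : Fin m), (⟨j, hj⟩ : Fin n)) = ((i + j : ℕ) : ZMod 3) :=
            ihi hi' j hj
          have hne1 : c' ((⟨i+1, hi⟩ : Fin m), (⟨j, hj⟩ : Fin n)) ≠ ((i + j : ℕ) : ZMod 3) := by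
            rw [← h2]
            exact Ne.symm (hp _ _ ((gridAdj_iff _ _).2 (Or.inr ⟨rfl, Or.inl rfl⟩)))
          have hne2 : c' ((⟨i+1, hi⟩ : Fin m), (⟨j, hj⟩ : Fin n)) ≠ ((i + j : ℕ) : ZMod 3) + 2 := by
            have : ((i + 1 + (j+1) : ℕ) : ZMod 3) = ((i + j : ℕ) : ZMod 3) + 2 := by
              push_cast; ring
            rw [← this, ← h1]
            exact hp _ _ ((gridAdj_iff _ _).2 (Or.inl ⟨rfl, Or.inl rfl⟩))
          have := zmod3_forced _ _ hne1 hne2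
          rw [this]; push_cast; ring
      intro j hj
      exact back (n - 1 - j) j hj (by omega)
  funext v
  obtain ⟨⟨i, hi⟩, ⟨j, hj⟩⟩ := v
  rw [key i hi j hj]
  rfl

/-- Label of an edge: vertical edges get the larger row index, horizontal edges get
`m +` the larger column index. -/
def edgeLab (m n : ℕ) : Sym2 (Fin m × Fin n) → ℕ :=
  Sym2.lift ⟨fun u v => if u.1 = v.1 then m + max u.2.val v.2.val else max u.1.val v.1.val,
    by
      intro u v
      dsimp only
      by_cases h : u.1 = v.1
      · rw [if_pos h, if_pos h.symm, max_comm]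
      · rw [if_neg h, if_neg (fun hh : v.1 = u.1 => h hh.symm), max_comm]⟩

lemma edgeLab_mk {m n : ℕ} (u v : Fin m × Fin n) :
    edgeLab m n s(u, v) =
      if u.1 = v.1 then m + max u.2.val v.2.val else max u.1.val v.1.val := by
  simp [edgeLab]

/-- Row-shift coloring: add 1 to the diagonal coloring on rows `≥ k`. -/
def rowShift {m n : ℕ} (k : ℕ) : Fin m × Fin n → ZMod 3 :=
  fun v => ((v.1.val + v.2.val : ℕ) : ZMod 3) + (if k ≤ v.1.val then 1 else 0)

/-- Column-shift coloring: add 1 on columns `≥ l`. -/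
def colShift {m n : ℕ} (l : ℕ) : Fin m × Fin n → ZMod 3 :=
  fun v => ((v.1.val + v.2.val : ℕ) : ZMod 3) + (if l ≤ v.2.val then 1 else 0)

lemma zmod3_one_ne_zero : (1 : ZMod 3) ≠ 0 := by decide
lemma zmod3_two_ne_zero : (2 : ZMod 3) ≠ 0 := by decide

lemma rowShift_proper {m n : ℕ} (k : ℕ) : IsProperColoring (rowShift (m := m) (n := n) k) := by
  intro u v hadj heq
  rcases (gridAdj_iff u v).1 hadj with ⟨h1, h2 | h2⟩ | ⟨h1, h2 | h2⟩
  · -- cols: u.2 + 1 = v.2, rows equal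
    simp only [rowShift, h1] at heq
    rw [← h2] at heq
    apply zmod3_one_ne_zero
    push_cast at heq
    first | linear_combination heq | first | linear_combination heq | linear_combination -heq
  · simp only [rowShift, h1] at heq
    rw [← h2] at heq
    apply zmod3_one_ne_zero
    push_cast at heq
    first | linear_combination heq | linear_combination -heq
  · -- rows: u.1 + 1 = v.1, cols equal
    simp only [rowShift, h1] at heq
    rw [← h2] at heq
    by_cases hu : k ≤ u.1.val
    · rw [if_pos hu, if_pos (by omega)] at heq
      apply zmod3_one_ne_zero; push_cast at heq; first | linear_combination heq | first | linear_combination heq | linear_combination -heq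
    · rw [if_neg hu] at heq
      by_cases hv : k ≤ u.1.val + 1
      · rw [if_pos hv] at heq
        apply zmod3_two_ne_zero; push_cast at heq; first | linear_combination heq | first | linear_combination heq | linear_combination -heq
      · rw [if_neg hv] at heq
        apply zmod3_one_ne_zero; push_cast at heq; first | linear_combination heq | first | linear_combination heq | linear_combination -heq
  · simp only [rowShift, h1] at heq
    rw [← h2] at heq
    by_cases hu : k ≤ v.1.val
    · rw [if_pos hu, if_pos (by omega)] at heq
      apply zmod3_one_ne_zero; push_cast at heq; first | linear_combination heq | linear_combination -heq
    · rw [if_neg hu] at heq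
      by_cases hv : k ≤ v.1.val + 1
      · rw [if_pos hv] at heq
        apply zmod3_two_ne_zero; push_cast at heq; first | linear_combination heq | linear_combination -heq
      · rw [if_neg hv] at heq
        apply zmod3_one_ne_zero; push_cast at heq; first | linear_combination heq | linear_combination -heq

lemma colShift_proper {m n : ℕ} (l : ℕ) : IsProperColoring (colShift (m := m) (n := n) l) := by
  intro u v hadj heq
  rcases (gridAdj_iff u v).1 hadj with ⟨h1, h2 | h2⟩ | ⟨h1, h2 | h2⟩
  · simp only [colShift, h1] at heq
    rw [← h2] at heq
    by_cases hu : l ≤ u.2.val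
    · rw [if_pos hu, if_pos (by omega)] at heq
      apply zmod3_one_ne_zero; push_cast at heq; first | linear_combination heq | first | linear_combination heq | linear_combination -heq
    · rw [if_neg hu] at heq
      by_cases hv : l ≤ u.2.val + 1
      · rw [if_pos hv] at heq
        apply zmod3_two_ne_zero; push_cast at heq; first | linear_combination heq | first | linear_combination heq | linear_combination -heq
      · rw [if_neg hv] at heq
        apply zmod3_one_ne_zero; push_cast at heq; first | linear_combination heq | first | linear_combination heq | linear_combination -heq
  · simp only [colShift, h1] at heq
    rw [← h2] at heq
    by_cases hu : l ≤ v.2.val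
    · rw [if_pos hu, if_pos (by omega)] at heq
      apply zmod3_one_ne_zero; push_cast at heq; first | linear_combination heq | linear_combination -heq
    · rw [if_neg hu] at heq
      by_cases hv : l ≤ v.2.val + 1
      · rw [if_pos hv] at heq
        apply zmod3_two_ne_zero; push_cast at heq; first | linear_combination heq | linear_combination -heq
      · rw [if_neg hv] at heq
        apply zmod3_one_ne_zero; push_cast at heq; first | linear_combination heq | linear_combination -heq
  · simp only [colShift, h1] at heq
    rw [← h2] at heq
    apply zmod3_one_ne_zero
    push_cast at heq
    first | linear_combination heq | first | linear_combination heq | linear_combination -heq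
  · simp only [colShift, h1] at heq
    rw [← h2] at heq
    apply zmod3_one_ne_zero
    push_cast at heq
    first | linear_combination heq | linear_combination -heq

lemma fin_zero_val (m : ℕ) [NeZero m] : ((0 : Fin m)).val = 0 := rfl

lemma forcing_card_lower (m n : ℕ) [NeZero m] [NeZero n]
    (F : Finset (Sym2 (Fin m × Fin n)))
    (hforce : IsForcing diagonalColoring (↑F : Set (Sym2 (Fin m × Fin n)))) :
    m + n - 2 ≤ F.card := by
  have hm := Nat.pos_of_ne_zero (NeZero.ne m)
  have hn := Nat.pos_of_ne_zero (NeZero.ne n)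
  set S : Finset ℕ := Finset.Ico 1 m ∪ Finset.Ico (m+1) (m+n) with hS
  have hSsub : S ⊆ F.image (edgeLab m n) := by
    intro k hk
    simp only [hS, Finset.mem_union, Finset.mem_Ico] at hk
    rcases hk with ⟨hk1, hk2⟩ | ⟨hk1, hk2⟩
    · -- row gap k
      have hne : rowShift (m := m) (n := n) k ≠ diagonalColoring := by
        intro h
        have h2 := congrFun h ((⟨k, hk2⟩ : Fin m), (⟨0, hn⟩ : Fin n))
        simp only [rowShift, diagonalColoring] at h2
        rw [if_pos (le_refl k)] at h2
        exact zmod3_one_ne_zero (by linear_combination h2)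
      have h00 : rowShift (m := m) (n := n) k ((0 : Fin m), (0 : Fin n))
          = diagonalColoring ((0 : Fin m), (0 : Fin n)) := by
        simp only [rowShift, diagonalColoring, fin_zero_val]
        simp only [show ¬ k ≤ 0 by omega, ↓reduceIte]
        ring
      have hnall : ¬ (∀ u v : Fin m × Fin n, GridAdj u v → s(u,v) ∈ (↑F : Set _) →
          rowShift k v - rowShift k u = diagonalColoring v - diagonalColoring u) :=
        fun hall => hne (hforce _ (rowShift_proper k) h00 hall)
      push_neg at hnall
      obtain ⟨u, v, hadj, hmem, hdne⟩ := hnall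
      have hind : (k ≤ u.1.val ∧ ¬ k ≤ v.1.val) ∨ (¬ k ≤ u.1.val ∧ k ≤ v.1.val) := by
        by_contra hcon
        apply hdne
        simp only [rowShift, diagonalColoring]
        by_cases h : k ≤ u.1.val
        · rw [if_pos h, if_pos (by tauto)]; ring
        · rw [if_neg h, if_neg (by tauto)]; ring
      rcases (gridAdj_iff u v).1 hadj with ⟨h1, _⟩ | ⟨_, h2⟩
      · omega
      · have hu1v1 : u.1 ≠ v.1 := by
          intro h
          have := congrArg Fin.val h
          omega
        refine Finset.mem_image.2 ⟨s(u,v), Finset.mem_coe.1 hmem, ?_⟩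
        rw [edgeLab_mk, if_neg hu1v1]
        omega
    · -- column gap l = k - m
      set l := k - m with hl
      have hln : l < n := by omega
      have hne : colShift (m := m) (n := n) l ≠ diagonalColoring := by
        intro h
        have h2 := congrFun h ((⟨0, hm⟩ : Fin m), (⟨l, hln⟩ : Fin n))
        simp only [colShift, diagonalColoring] at h2
        rw [if_pos (le_refl l)] at h2
        exact zmod3_one_ne_zero (by linear_combination h2)
      have h00 : colShift (m := m) (n := n) l ((0 : Fin m), (0 : Fin n))
          = diagonalColoring ((0 : Fin m), (0 : Fin n)) := by
        simp only [colShift, diagonalColoring, fin_zero_val]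
        simp only [show ¬ l ≤ 0 by omega, ↓reduceIte]
        ring
      have hnall : ¬ (∀ u v : Fin m × Fin n, GridAdj u v → s(u,v) ∈ (↑F : Set _) →
          colShift l v - colShift l u = diagonalColoring v - diagonalColoring u) :=
        fun hall => hne (hforce _ (colShift_proper l) h00 hall)
      push_neg at hnall
      obtain ⟨u, v, hadj, hmem, hdne⟩ := hnall
      have hind : (l ≤ u.2.val ∧ ¬ l ≤ v.2.val) ∨ (¬ l ≤ u.2.val ∧ l ≤ v.2.val) := by
        by_contra hcon
        apply hdne
        simp only [colShift, diagonalColoring]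
        by_cases h : l ≤ u.2.val
        · rw [if_pos h, if_pos (by tauto)]; ring
        · rw [if_neg h, if_neg (by tauto)]; ring
      rcases (gridAdj_iff u v).1 hadj with ⟨h1, h2⟩ | ⟨h1, _⟩
      · have hu1v1 : u.1 = v.1 := Fin.ext h1
        refine Finset.mem_image.2 ⟨s(u,v), Finset.mem_coe.1 hmem, ?_⟩
        rw [edgeLab_mk, if_pos hu1v1]
        omega
      · omega
  have hScard : S.card = m + n - 2 := by
    rw [hS, Finset.card_union_of_disjoint]
    · rw [Nat.card_Ico, Nat.card_Ico]
      omega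
    · simp only [Finset.disjoint_left, Finset.mem_Ico]
      intro a ha hb
      omega
  calc m + n - 2 = S.card := hScard.symm
    _ ≤ (F.image (edgeLab m n)).card := Finset.card_le_card hSsub
    _ ≤ F.card := Finset.card_image_le

/-- **Theorem 2 of the paper (tight lower bound).** The minimum cardinality of a
forcing set for the diagonal coloring of the `m × n` grid graph is exactly
`m + n - 2`, the smallest possible for any Miura-ori pattern. -/
theorem diagonal_min_forcing_set {m n : ℕ} [NeZero m] [NeZero n] :
    (∃ F : Finset (Sym2 (Fin m × Fin n)), ↑F ⊆ GridEdges m n ∧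
      IsForcing diagonalColoring (↑F : Set (Sym2 (Fin m × Fin n))) ∧
      F.card = m + n - 2) ∧
    (∀ F : Finset (Sym2 (Fin m × Fin n)), ↑F ⊆ GridEdges m n →
      IsForcing diagonalColoring (↑F : Set (Sym2 (Fin m × Fin n))) →
      m + n - 2 ≤ F.card) := by
  exact ⟨⟨gammaSet m n, gammaSet_subset m n, gammaSet_forcing m n, gammaSet_card m n⟩,
    fun F _ hf => forcing_card_lower m n F hf⟩
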